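/- A tempered distribution f on ℝⁿ has quasi-asymptotics g of degree α at infinity with respect to an automodel function ρ(t) if and only if its Fourier transform F[f] has quasi-asymptotics F[g] of degree −α−n at zero with respect to the automodel function tⁿρ(t). Precisely: f(tx)/ρ(t) → g(x) in S'(ℝⁿ) as t → ∞ if and only if F[f](ξ/t)/(tⁿρ(t)) → F[g](ξ) in S'(ℝⁿ) as t → ∞. -/

import Mathlib

open MeasureTheory SchwartzMap Filter Topology

noncomputable section

/-- Multiplication by a nonzero scalar `t` as a continuous linear equivalence. -/
def dilEquiv {E : Type*} [NormedAddCommGroup E] [NormedSpace ℝ E] (t : ℝ) (ht : t ≠ 0) :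
    E ≃L[ℝ] E :=
  { LinearEquiv.smulOfNeZero ℝ E t ht with
    continuous_toFun := continuous_const_smul t
    continuous_invFun := continuous_const_smul t⁻¹ }

/-- Dilation `φ ↦ φ (t • ·)` on Schwartz space, `t ≠ 0`. -/
def dil {E : Type*} [NormedAddCommGroup E] [NormedSpace ℝ E] (t : ℝ) (ht : t ≠ 0) :
    𝓢(E, ℂ) →L[ℝ] 𝓢(E, ℂ) :=
  SchwartzMap.compCLMOfContinuousLinearEquiv ℝ (dilEquiv t ht)

/-- The pairing `⟨f(t·), φ⟩ = t^{-n} ⟨f, φ(·/t)⟩` of the scaled tempered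
distribution `x ↦ f(t x)` with a test function (junk value `0` for `t = 0`). -/
def pairScaled (n : ℕ) (f : 𝓢(EuclideanSpace ℝ (Fin n), ℂ) →L[ℂ] ℂ) (t : ℝ)
    (φ : 𝓢(EuclideanSpace ℝ (Fin n), ℂ)) : ℂ :=
  if ht : t ≠ 0 then ((t ^ (-(n : ℤ)) : ℝ) : ℂ) * f (dil t⁻¹ (inv_ne_zero ht) φ) else 0

/-- The pairing `⟨F[f](·/t), φ⟩ = tⁿ ⟨F[f], φ(t·)⟩ = tⁿ ⟨f, F[φ(t·)]⟩` of the scaled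
Fourier transform `ξ ↦ F[f](ξ/t)` with a test function (junk value `0` for `t = 0`). -/
def pairFourierScaled (n : ℕ) (f : 𝓢(EuclideanSpace ℝ (Fin n), ℂ) →L[ℂ] ℂ) (t : ℝ)
    (φ : 𝓢(EuclideanSpace ℝ (Fin n), ℂ)) : ℂ :=
  if ht : t ≠ 0 then ((t ^ (n : ℤ) : ℝ) : ℂ) * f (fourierTransformCLM ℂ (dil t ht φ)) else 0

open FourierTransform RealInnerProductSpace in
lemma fourier_dil (n : ℕ) (t : ℝ) (ht : 0 < t) (φ : 𝓢(EuclideanSpace ℝ (Fin n), ℂ)) :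
    fourierTransformCLM ℂ (dil t ht.ne' φ) =
      ((t ^ n)⁻¹ : ℝ) • dil t⁻¹ (inv_ne_zero ht.ne') (fourierTransformCLM ℂ φ) := by
  ext ξ
  have h1 : (fourierTransformCLM ℂ (dil t ht.ne' φ)) ξ = 𝓕 (fun x => φ (t • x)) ξ := rfl
  rw [h1, Real.fourier_eq]
  have key : ∀ v : EuclideanSpace ℝ (Fin n),
      𝐞 (-⟪v, ξ⟫) • φ (t • v)
        = (fun u => 𝐞 (-⟪u, t⁻¹ • ξ⟫) • φ u) (t • v) := by
    intro v
    simp only [real_inner_smul_left, real_inner_smul_right]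
    congr 1
    field_simp
  simp_rw [key]
  rw [MeasureTheory.Measure.integral_comp_smul volume
    (fun u => 𝐞 (-⟪u, t⁻¹ • ξ⟫) • φ u) t]
  have h2 : |((t ^ Module.finrank ℝ (EuclideanSpace ℝ (Fin n)))⁻¹ : ℝ)| = (t ^ n)⁻¹ := by
    rw [finrank_euclideanSpace_fin, abs_of_pos (by positivity)]
  rw [h2]
  simp only [SchwartzMap.smul_apply]
  congr 1

lemma pair_eq (n : ℕ) (f : 𝓢(EuclideanSpace ℝ (Fin n), ℂ) →L[ℂ] ℂ) (ρ : ℝ → ℝ)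
    (t : ℝ) (ht : 0 < t) (φ : 𝓢(EuclideanSpace ℝ (Fin n), ℂ)) :
    pairFourierScaled n f t φ / ((t ^ (n : ℕ) * ρ t : ℝ) : ℂ)
      = pairScaled n f t (fourierTransformCLM ℂ φ) / ((ρ t : ℝ) : ℂ) := by
  rw [pairFourierScaled, pairScaled, dif_pos ht.ne', dif_pos ht.ne',
    fourier_dil n t ht φ, f.map_smul_of_tower]
  have htn : ((t : ℂ) ^ n) ≠ 0 := pow_ne_zero _ (by exact_mod_cast ht.ne')
  push_cast [zpow_natCast, zpow_neg, Complex.real_smul]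
  field_simp

/-- Tauberian theorem (Theorem 5): a tempered distribution `f` on `ℝⁿ` has
quasi-asymptotics `g` at infinity with respect to an automodel function `ρ` of degree `α`
iff its Fourier transform has quasi-asymptotics `F[g]` at zero with respect to `tⁿ ρ(t)`. -/
theorem quasiasymptotics_infinity_iff_fourier_zero (n : ℕ)
    (f g : 𝓢(EuclideanSpace ℝ (Fin n), ℂ) →L[ℂ] ℂ) (ρ : ℝ → ℝ) (α : ℝ)
    (hρpos : ∀ t : ℝ, 0 < t → 0 < ρ t)
    (hρcont : ContinuousOn ρ (Set.Ioi (0 : ℝ)))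
    (hauto : ∀ a : ℝ, 0 < a → Tendsto (fun t => ρ (t * a) / ρ t) atTop (𝓝 (a ^ α))) :
    (∀ φ, Tendsto (fun t : ℝ => pairScaled n f t φ / ((ρ t : ℝ) : ℂ)) atTop (𝓝 (g φ))) ↔
    (∀ φ, Tendsto (fun t : ℝ => pairFourierScaled n f t φ / (((t ^ (n : ℕ) * ρ t : ℝ)) : ℂ))
        atTop (𝓝 (g (fourierTransformCLM ℂ φ)))) := by
  constructor
  · intro h φ
    refine (h (fourierTransformCLM ℂ φ)).congr' ?_
    filter_upwards [eventually_gt_atTop (0 : ℝ)] with t ht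
    exact (pair_eq n f ρ t ht φ).symm
  · intro h ψ
    have hFφ : fourierTransformCLM ℂ ((fourierTransformCLE ℂ 𝓢(EuclideanSpace ℝ (Fin n), ℂ)).symm ψ) = ψ :=
      (fourierTransformCLE ℂ 𝓢(EuclideanSpace ℝ (Fin n), ℂ)).apply_symm_apply ψ
    have h2 := h ((fourierTransformCLE ℂ 𝓢(EuclideanSpace ℝ (Fin n), ℂ)).symm ψ)
    rw [hFφ] at h2
    refine h2.congr' ?_
    filter_upwards [eventually_gt_atTop (0 : ℝ)] with t ht
    rw [pair_eq n f ρ t ht, hFφ]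

end
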